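/- Suppose that at every point of U one has k₁ ≠ 0, k₂ ≠ 0, k₁ ≠ k₂, ∂₁k₁ ≠ 0 and ∂₂k₂ ≠ 0, and let Q := k₁·k₂/(k₁ − k₂). Then the following are equivalent on U: (i) k₁·(∂₁k₁·∂₂Q − ∂₂k₁·∂₁Q)/((k₁ − k₂)·∂₁k₁) = 0 at every point of U; (ii) k₂·(∂₂k₂·∂₁Q − ∂₁k₂·∂₂Q)/((k₂ − k₁)·∂₂k₂) = 0 at every point of U; (iii) ∂₁k₁·∂₂k₂ − ∂₂k₁·∂₁k₂ = 0 at every point of U. (Corollary 2: the isothermic condition for the distinguished net on the first central surface, the isothermic condition for the distinguished net on the second central surface, and the W-surface condition are pairwise equivalent.) -/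

import Mathlib

/-- Partial derivative in the first coordinate direction on ℝ². -/
noncomputable def pd1 (f : ℝ × ℝ → ℝ) (p : ℝ × ℝ) : ℝ := fderiv ℝ f p (1, 0)

/-- Partial derivative in the second coordinate direction on ℝ². -/
noncomputable def pd2 (f : ℝ × ℝ → ℝ) (p : ℝ × ℝ) : ℝ := fderiv ℝ f p (0, 1)

lemma fderivQ (k₁ k₂ Q : ℝ × ℝ → ℝ) (p : ℝ × ℝ)
    (h1 : DifferentiableAt ℝ k₁ p) (h2 : DifferentiableAt ℝ k₂ p)
    (hD : k₁ p - k₂ p ≠ 0)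
    (hQ : ∀ x, Q x = k₁ x * k₂ x / (k₁ x - k₂ x)) (v : ℝ × ℝ) :
    fderiv ℝ Q p v = (-(k₂ p)^2 * fderiv ℝ k₁ p v + (k₁ p)^2 * fderiv ℝ k₂ p v) /
      (k₁ p - k₂ p)^2 := by
  have hQf : Q = fun x => (k₁ x * k₂ x) * ((k₁ x - k₂ x)⁻¹) := by
    funext x; rw [hQ x, div_eq_mul_inv]
  have hN : HasFDerivAt (fun x => k₁ x * k₂ x)
      (k₁ p • fderiv ℝ k₂ p + k₂ p • fderiv ℝ k₁ p) p :=
    h1.hasFDerivAt.mul h2.hasFDerivAt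
  have hDen : HasFDerivAt (fun x => k₁ x - k₂ x)
      (fderiv ℝ k₁ p - fderiv ℝ k₂ p) p := h1.hasFDerivAt.sub h2.hasFDerivAt
  have hInv : HasDerivAt (fun y : ℝ => y⁻¹) (-((k₁ p - k₂ p) ^ 2)⁻¹) (k₁ p - k₂ p) :=
    hasDerivAt_inv hD
  have hcomp : HasFDerivAt (fun x => (k₁ x - k₂ x)⁻¹)
      ((-((k₁ p - k₂ p) ^ 2)⁻¹) • (fderiv ℝ k₁ p - fderiv ℝ k₂ p)) p :=
    hInv.comp_hasFDerivAt p hDen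
  have hQ' : HasFDerivAt (fun x => k₁ x * k₂ x * (k₁ x - k₂ x)⁻¹) _ p := hN.mul hcomp
  rw [hQf, hQ'.fderiv]
  simp only [ContinuousLinearMap.smul_apply, ContinuousLinearMap.sub_apply,
    ContinuousLinearMap.add_apply, smul_eq_mul]
  field_simp
  ring

lemma aux_div (x y z : ℝ) (hx : x ≠ 0) (hz : z ≠ 0) : x * y / z = 0 ↔ y = 0 := by
  rw [div_eq_zero_iff, mul_eq_zero]
  tauto

theorem stmt_9 (U : Set (ℝ × ℝ)) (hU : IsOpen U)
    (k₁ k₂ : ℝ × ℝ → ℝ)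
    (hk₁ : ∀ p ∈ U, DifferentiableAt ℝ k₁ p)
    (hk₂ : ∀ p ∈ U, DifferentiableAt ℝ k₂ p)
    (hk₁ne : ∀ p ∈ U, k₁ p ≠ 0)
    (hk₂ne : ∀ p ∈ U, k₂ p ≠ 0)
    (hne : ∀ p ∈ U, k₁ p ≠ k₂ p)
    (hd₁k₁ : ∀ p ∈ U, pd1 k₁ p ≠ 0)
    (hd₂k₂ : ∀ p ∈ U, pd2 k₂ p ≠ 0)
    (Q : ℝ × ℝ → ℝ) (hQ : ∀ x, Q x = k₁ x * k₂ x / (k₁ x - k₂ x)) :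
    ((∀ p ∈ U, k₁ p * (pd1 k₁ p * pd2 Q p - pd2 k₁ p * pd1 Q p) /
        ((k₁ p - k₂ p) * pd1 k₁ p) = 0) ↔
     (∀ p ∈ U, k₂ p * (pd2 k₂ p * pd1 Q p - pd1 k₂ p * pd2 Q p) /
        ((k₂ p - k₁ p) * pd2 k₂ p) = 0)) ∧
    ((∀ p ∈ U, k₁ p * (pd1 k₁ p * pd2 Q p - pd2 k₁ p * pd1 Q p) /
        ((k₁ p - k₂ p) * pd1 k₁ p) = 0) ↔
     (∀ p ∈ U, pd1 k₁ p * pd2 k₂ p - pd2 k₁ p * pd1 k₂ p = 0)) := by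
  have key : ∀ p ∈ U,
      ((k₁ p * (pd1 k₁ p * pd2 Q p - pd2 k₁ p * pd1 Q p) /
        ((k₁ p - k₂ p) * pd1 k₁ p) = 0) ↔
        (pd1 k₁ p * pd2 k₂ p - pd2 k₁ p * pd1 k₂ p = 0)) ∧
      ((k₂ p * (pd2 k₂ p * pd1 Q p - pd1 k₂ p * pd2 Q p) /
        ((k₂ p - k₁ p) * pd2 k₂ p) = 0) ↔
        (pd1 k₁ p * pd2 k₂ p - pd2 k₁ p * pd1 k₂ p = 0)) := by
    intro p hp
    have hD : k₁ p - k₂ p ≠ 0 := sub_ne_zero.2 (hne p hp)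
    have hQ1 : pd1 Q p = (-(k₂ p)^2 * pd1 k₁ p + (k₁ p)^2 * pd1 k₂ p) /
        (k₁ p - k₂ p)^2 :=
      fderivQ k₁ k₂ Q p (hk₁ p hp) (hk₂ p hp) hD hQ (1, 0)
    have hQ2 : pd2 Q p = (-(k₂ p)^2 * pd2 k₁ p + (k₁ p)^2 * pd2 k₂ p) /
        (k₁ p - k₂ p)^2 :=
      fderivQ k₁ k₂ Q p (hk₁ p hp) (hk₂ p hp) hD hQ (0, 1)
    have h1 := hk₁ne p hp
    have h2 := hk₂ne p hp
    have ha := hd₁k₁ p hp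
    have hd := hd₂k₂ p hp
    have hD' : k₂ p - k₁ p ≠ 0 := fun h => hD (by linarith [sub_eq_zero.1 h])
    constructor
    · have e1 : k₁ p * (pd1 k₁ p * pd2 Q p - pd2 k₁ p * pd1 Q p) /
          ((k₁ p - k₂ p) * pd1 k₁ p) =
          (k₁ p)^3 * (pd1 k₁ p * pd2 k₂ p - pd2 k₁ p * pd1 k₂ p) /
          ((k₁ p - k₂ p)^3 * pd1 k₁ p) := by
        rw [hQ1, hQ2]
        field_simp
        ring
      rw [e1]
      exact aux_div _ _ _ (pow_ne_zero 3 h1) (mul_ne_zero (pow_ne_zero 3 hD) ha)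
    · have e2 : k₂ p * (pd2 k₂ p * pd1 Q p - pd1 k₂ p * pd2 Q p) /
          ((k₂ p - k₁ p) * pd2 k₂ p) =
          (-(k₂ p)^3) * (pd1 k₁ p * pd2 k₂ p - pd2 k₁ p * pd1 k₂ p) /
          ((k₁ p - k₂ p)^2 * (k₂ p - k₁ p) * pd2 k₂ p) := by
        rw [hQ1, hQ2]
        field_simp
        ring
      rw [e2]
      exact aux_div _ _ _ (neg_ne_zero.2 (pow_ne_zero 3 h2))
        (mul_ne_zero (mul_ne_zero (pow_ne_zero 2 hD) hD') hd)
  refine ⟨⟨fun h p hp => ?_, fun h p hp => ?_⟩, ⟨fun h p hp => ?_, fun h p hp => ?_⟩⟩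
  · exact ((key p hp).2).2 (((key p hp).1).1 (h p hp))
  · exact ((key p hp).1).2 (((key p hp).2).1 (h p hp))
  · exact ((key p hp).1).1 (h p hp)
  · exact ((key p hp).1).2 (h p hp)
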